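/- For σ > 0 and β > 0, the function E(ω) = ((σ(log(√ω/2)+γ))/(2π(σ+1)) - 1/(4π)) · (-(log(√ω/2)+γ)/(2πβ))^(1/σ) on (0, ω̃) with ω̃ = 4e^(-2γ) is unbounded from below: lim_{ω→0⁺} E(ω) = -∞. -/

import Mathlib

noncomputable section
open Real Filter Set Topology

/-- The Euler–Mascheroni constant. -/
def euγ : ℝ := Real.eulerMascheroniConstant

/-- The threshold frequency. -/
def ωtilde : ℝ := 4 * Real.exp (-2 * euγ)

/-- The charge of the standing wave at frequency ω. -/
def charge (σ β ω : ℝ) : ℝ :=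
  (-(Real.log (Real.sqrt ω / 2) + euγ) / (2 * π * β)) ^ (1 / (2 * σ))

/-- The inverse change of variables, frequency as a function of the charge. -/
def ωof (σ β q : ℝ) : ℝ := 4 * Real.exp (-2 * euγ - 4 * π * β * q ^ (2 * σ))

/-- Energy of the standing wave as a function of the frequency. -/
def Eω (σ β ω : ℝ) : ℝ :=
  (σ * (Real.log (Real.sqrt ω / 2) + euγ) / (2 * π * (σ + 1)) - 1 / (4 * π)) *
    (-(Real.log (Real.sqrt ω / 2) + euγ) / (2 * π * β)) ^ (1 / σ)

/-- Energy of the standing wave as a function of the charge. -/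
def Echarge (σ β q : ℝ) : ℝ := -q ^ 2 / (4 * π) - σ * β * q ^ (2 * σ + 2) / (σ + 1)

/-- Mass of the standing wave as a function of the frequency. -/
def Mω (σ β ω : ℝ) : ℝ :=
  (1 / (4 * π * ω)) * (-(Real.log (Real.sqrt ω / 2) + euγ) / (2 * π * β)) ^ (1 / σ)

/-- Mass of the standing wave as a function of the charge. -/
def Mq (σ β q : ℝ) : ℝ := q ^ 2 * Real.exp (2 * euγ + 4 * π * β * q ^ (2 * σ)) / (16 * π)

/-- The minimizing charge. -/
def qbar (σ β : ℝ) : ℝ := (-(4 * π * σ * β)) ^ (-(1 / (2 * σ)) : ℝ)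

/-- The blow-up energy threshold. -/
def Λ (σ β : ℝ) : ℝ := -σ / (4 * π * (σ + 1) * (-(4 * π * σ * β)) ^ (1 / σ))

/-- The frequency of minimal energy / maximal mass. -/
def ωbar (σ : ℝ) : ℝ := 4 * Real.exp (-2 * euγ + 1 / σ)

/-- The maximal mass. -/
def μbar (σ β : ℝ) : ℝ :=
  Real.exp (2 * euγ - 1 / σ) / (16 * π * (-(4 * π * σ * β)) ^ (1 / σ))

theorem stmt18 (σ β : ℝ) (hσ : 0 < σ) (hβ : 0 < β) :
    Filter.Tendsto (Eω σ β) (nhdsWithin 0 (Set.Ioi 0)) Filter.atBot := by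
  have hL : Tendsto (fun ω => Real.log (Real.sqrt ω / 2) + euγ)
      (nhdsWithin 0 (Set.Ioi 0)) atBot := by
    apply Filter.tendsto_atBot_add_const_right
    apply Real.tendsto_log_nhdsGT_zero.comp
    apply tendsto_nhdsWithin_of_tendsto_nhds_of_eventually_within _
    · have : Tendsto (fun ω : ℝ => Real.sqrt ω / 2) (nhds 0) (nhds (Real.sqrt 0 / 2)) :=
        (Real.continuous_sqrt.div_const 2).continuousAt
      simpa using this.mono_left nhdsWithin_le_nhds
    · filter_upwards [self_mem_nhdsWithin] with x hx
      have : 0 < Real.sqrt x := Real.sqrt_pos.2 hx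
      exact div_pos this (by norm_num)
  have h1 : Tendsto (fun ω => σ * (Real.log (Real.sqrt ω / 2) + euγ) / (2 * π * (σ + 1))
      - 1 / (4 * π)) (nhdsWithin 0 (Set.Ioi 0)) atBot := by
    apply Filter.tendsto_atBot_add_const_right
    apply Tendsto.atBot_div_const (by positivity)
    exact hL.const_mul_atBot hσ
  have h2 : Tendsto (fun ω => (-(Real.log (Real.sqrt ω / 2) + euγ) / (2 * π * β)) ^ (1 / σ))
      (nhdsWithin 0 (Set.Ioi 0)) atTop := by
    apply (tendsto_rpow_atTop (by positivity : 0 < 1 / σ)).comp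
    apply Tendsto.atTop_div_const (by positivity)
    exact tendsto_neg_atBot_atTop.comp hL
  exact h1.atBot_mul_atTop₀ h2
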